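/- arXiv:1511.07769 — 8 statements merged into one kernel-verified Lean document; each statement's English description precedes it below -/
import Mathlib

section
/- With X = A × B × I and σ as in the construction (σ_{(a,b,i)}(c,d,j) = (c, d+φ₁(a−c), j) if i=j, (c+φ₂(b), d, j) if i≠j), define γ_{(c,d,j)}(a,b,i) = σ^{-1}_{σ_{(a,b,i)}(c,d,j)}(a,b,i). Then γ_{(c,d,j)} is a bijection of X and γ^{-1}_{(c,d,j)} = σ_{(c,d,j)}. -/
/-- The map `σ_{(a,b,i)}` of the main construction:
`σ_{(a,b,i)}(c,d,j) = (c, d + φ₁(a−c), j)` if `i = j`, and `(c + φ₂(b), d, j)` if `i ≠ j`. -/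
def sigmaMap {A B I : Type*} [AddCommGroup A] [AddCommGroup B] [DecidableEq I]
    (φ₁ : A → B) (φ₂ : B →+ A) (p q : A × B × I) : A × B × I :=
  if p.2.2 = q.2.2 then (q.1, q.2.1 + φ₁ (p.1 - q.1), q.2.2)
  else (q.1 + φ₂ p.2.1, q.2.1, q.2.2)

/-- The claimed inverse of `σ_{(a,b,i)}`:
`(c,d,j) ↦ (c, d − φ₁(a−c), j)` if `i = j`, and `(c − φ₂(b), d, j)` if `i ≠ j`. -/
def sigmaInvMap {A B I : Type*} [AddCommGroup A] [AddCommGroup B] [DecidableEq I]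
    (φ₁ : A → B) (φ₂ : B →+ A) (p q : A × B × I) : A × B × I :=
  if p.2.2 = q.2.2 then (q.1, q.2.1 - φ₁ (p.1 - q.1), q.2.2)
  else (q.1 - φ₂ p.2.1, q.2.1, q.2.2)

/-- `γ_{(c,d,j)}(a,b,i) = σ⁻¹_{σ_{(a,b,i)}(c,d,j)}(a,b,i)` is bijective with inverse
`σ_{(c,d,j)}`. -/
theorem stmt7 {A B I : Type*} [AddCommGroup A] [AddCommGroup B] [DecidableEq I]
    [Nontrivial A] [Nontrivial B] [Nontrivial I]
    (φ₁ : A → B) (hφ₁ : ∀ a : A, φ₁ (-a) = φ₁ a) (φ₂ : B →+ A)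
    (γ : A × B × I → A × B × I → A × B × I)
    (hγ : ∀ q p : A × B × I, γ q p = sigmaInvMap φ₁ φ₂ (sigmaMap φ₁ φ₂ p q) p) :
    ∀ q : A × B × I,
      Function.Bijective (γ q) ∧
      Function.LeftInverse (sigmaMap φ₁ φ₂ q) (γ q) ∧
      Function.RightInverse (sigmaMap φ₁ φ₂ q) (γ q) := by
  intro q
  have hL : Function.LeftInverse (sigmaMap φ₁ φ₂ q) (γ q) := by
    rintro ⟨a, b, i⟩
    obtain ⟨c, d, j⟩ := q
    rw [hγ]
    rcases eq_or_ne i j with rfl | h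
    · simp [sigmaMap, sigmaInvMap, Prod.ext_iff]
    · simp [sigmaMap, sigmaInvMap, h, h.symm, Prod.ext_iff]
  have hR : Function.RightInverse (sigmaMap φ₁ φ₂ q) (γ q) := by
    rintro ⟨a, b, i⟩
    obtain ⟨c, d, j⟩ := q
    rw [hγ]
    rcases eq_or_ne j i with rfl | h
    · simp [sigmaMap, sigmaInvMap, Prod.ext_iff]
    · simp [sigmaMap, sigmaInvMap, h, h.symm, Prod.ext_iff]
  exact ⟨⟨hL.injective, hR.surjective⟩, hL, hR⟩
end

section
/- With X = A × B × I and σ as in the construction, the maps σ satisfy σ_{(a,b,i)} ∘ σ_{σ^{-1}_{(a,b,i)}(c,d,j)} = σ_{(c,d,j)} ∘ σ_{σ^{-1}_{(c,d,j)}(a,b,i)} for all a,c ∈ A, b,d ∈ B, i,j ∈ I. Consequently the map r: X² → X² defined by r((a,b,i),(c,d,j)) = (σ_{(a,b,i)}(c,d,j), σ^{-1}_{σ_{(a,b,i)}(c,d,j)}(a,b,i)) is an involutive non-degenerate set-theoretic solution of the Yang-Baxter equation. -/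
/-- `r` acting on coordinates 1,2 of a triple. -/
def rTwelve {X : Type*} (r : X × X → X × X) : X × X × X → X × X × X :=
  fun p => ((r (p.1, p.2.1)).1, (r (p.1, p.2.1)).2, p.2.2)

/-- `r` acting on coordinates 2,3 of a triple. -/
def rTwentyThree {X : Type*} (r : X × X → X × X) : X × X × X → X × X × X :=
  fun p => (p.1, r p.2)

section Aux

variable {A B I : Type*} [AddCommGroup A] [AddCommGroup B] [DecidableEq I]
    (φ₁ : A → B) (φ₂ : B →+ A)

lemma sigma_left_inv (p q : A × B × I) :
    sigmaInvMap φ₁ φ₂ p (sigmaMap φ₁ φ₂ p q) = q := by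
  obtain ⟨a, b, i⟩ := p; obtain ⟨c, d, j⟩ := q
  by_cases h : i = j <;> simp [sigmaMap, sigmaInvMap, h]

lemma sigma_right_inv (p q : A × B × I) :
    sigmaMap φ₁ φ₂ p (sigmaInvMap φ₁ φ₂ p q) = q := by
  obtain ⟨a, b, i⟩ := p; obtain ⟨c, d, j⟩ := q
  by_cases h : i = j <;> simp [sigmaMap, sigmaInvMap, h]


lemma sigma_comm (hφ₁ : ∀ a : A, φ₁ (-a) = φ₁ a) (p q : A × B × I) :
    sigmaMap φ₁ φ₂ p ∘ sigmaMap φ₁ φ₂ (sigmaInvMap φ₁ φ₂ p q) =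
    sigmaMap φ₁ φ₂ q ∘ sigmaMap φ₁ φ₂ (sigmaInvMap φ₁ φ₂ q p) := by
  have hφ₁' : ∀ a c : A, φ₁ (a - c) = φ₁ (c - a) := fun a c => by
    rw [← hφ₁ (a - c), neg_sub]
  obtain ⟨a, b, i⟩ := p; obtain ⟨c, d, j⟩ := q
  funext ⟨e, f, k⟩
  by_cases hij : i = j <;> by_cases hik : i = k <;> by_cases hjk : j = k <;>
    simp [sigmaMap, sigmaInvMap, Prod.ext_iff, hij, hik, hjk,
      eq_comm] <;>
    try constructor
  all_goals try simp only [hφ₁' a c]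
  all_goals first
    | rfl
    | abel1
    | (rw [← hφ₁]; congr 1; abel1)
    | (congr 1; abel1)

lemma sigma_bij (p : A × B × I) : Function.Bijective (sigmaMap φ₁ φ₂ p) :=
  Function.bijective_iff_has_inverse.2
    ⟨sigmaInvMap φ₁ φ₂ p, sigma_left_inv φ₁ φ₂ p, sigma_right_inv φ₁ φ₂ p⟩

lemma T_eq (q p : A × B × I) :
    sigmaInvMap φ₁ φ₂ (sigmaMap φ₁ φ₂ p q) p =
    (if p.2.2 = q.2.2 then (p.1, p.2.1 - φ₁ (q.1 - p.1), p.2.2)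
     else (p.1 - φ₂ q.2.1, p.2.1, p.2.2)) := by
  obtain ⟨a, b, i⟩ := p; obtain ⟨c, d, j⟩ := q
  by_cases h : i = j <;> simp [sigmaMap, sigmaInvMap, h, eq_comm]

lemma T_bij (q : A × B × I) :
    Function.Bijective (fun p => sigmaInvMap φ₁ φ₂ (sigmaMap φ₁ φ₂ p q) p) := by
  apply Function.bijective_iff_has_inverse.2
  refine ⟨fun p => if p.2.2 = q.2.2 then (p.1, p.2.1 + φ₁ (q.1 - p.1), p.2.2)
     else (p.1 + φ₂ q.2.1, p.2.1, p.2.2), fun p => ?_, fun p => ?_⟩ <;>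
  · simp only [T_eq]
    obtain ⟨a, b, i⟩ := p; obtain ⟨c, d, j⟩ := q
    by_cases h : i = j <;> simp [h]

@[simp] lemma sigmaMap_idx (p q : A × B × I) : (sigmaMap φ₁ φ₂ p q).2.2 = q.2.2 := by
  unfold sigmaMap; split <;> rfl

@[simp] lemma sigmaInvMap_idx (p q : A × B × I) : (sigmaInvMap φ₁ φ₂ p q).2.2 = q.2.2 := by
  unfold sigmaInvMap; split <;> rfl

lemma sigmaMap_pos (p q : A × B × I) (h : p.2.2 = q.2.2) :
    sigmaMap φ₁ φ₂ p q = (q.1, q.2.1 + φ₁ (p.1 - q.1), q.2.2) := if_pos h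

lemma sigmaMap_neg (p q : A × B × I) (h : ¬ p.2.2 = q.2.2) :
    sigmaMap φ₁ φ₂ p q = (q.1 + φ₂ p.2.1, q.2.1, q.2.2) := if_neg h

lemma sigmaInvMap_pos (p q : A × B × I) (h : p.2.2 = q.2.2) :
    sigmaInvMap φ₁ φ₂ p q = (q.1, q.2.1 - φ₁ (p.1 - q.1), q.2.2) := if_pos h

lemma sigmaInvMap_neg (p q : A × B × I) (h : ¬ p.2.2 = q.2.2) :
    sigmaInvMap φ₁ φ₂ p q = (q.1 - φ₂ p.2.1, q.2.1, q.2.2) := if_neg h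

lemma hphi' (hφ₁ : ∀ a : A, φ₁ (-a) = φ₁ a) (a c : A) : φ₁ (a - c) = φ₁ (c - a) := by
  rw [← hφ₁ (a - c), neg_sub]

set_option maxHeartbeats 2000000 in
lemma ybe_aux (hφ₁ : ∀ a : A, φ₁ (-a) = φ₁ a)
    (r : (A × B × I) × (A × B × I) → (A × B × I) × (A × B × I))
    (hr : ∀ p q : A × B × I,
      r (p, q) = (sigmaMap φ₁ φ₂ p q, sigmaInvMap φ₁ φ₂ (sigmaMap φ₁ φ₂ p q) p)) :
    (∀ z : (A × B × I) × (A × B × I) × (A × B × I),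
      rTwelve r (rTwentyThree r (rTwelve r z)) = rTwentyThree r (rTwelve r (rTwentyThree r z))) := by
  rintro ⟨⟨a, b, i⟩, ⟨c, d, j⟩, ⟨e, f, k⟩⟩
  simp only [rTwelve, rTwentyThree, hr]
  rcases eq_or_ne i j with rfl | hij
  · rcases eq_or_ne i k with rfl | hik
    · -- i = j = k
      simp [sigmaMap_pos, sigmaMap_neg, sigmaInvMap_pos, sigmaInvMap_neg,
        Prod.ext_iff, eq_comm, *]
      try simp only [hphi' φ₁ hφ₁ a c, hphi' φ₁ hφ₁ a e, hphi' φ₁ hφ₁ c e]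
      repeat' apply And.intro
      all_goals try first
        | rfl
        | abel1
        | (rw [← hφ₁]; congr 1; abel1)
        | (rw [show (e + φ₂ d - a : A) = -(a - φ₂ d - e) from by abel, hφ₁]; abel1)
        | (rw [show (e + φ₂ b - c : A) = -(c - φ₂ b - e) from by abel, hφ₁]; abel1)
        | (rw [show (c + φ₂ b - a : A) = -(a - φ₂ b - c) from by abel, hφ₁]; abel1)
        | (congr 1 <;> first | rfl | abel1 | (rw [← hφ₁]; congr 1; abel1))
      skip
    · -- i = j ≠ k
      simp [sigmaMap_pos, sigmaMap_neg, sigmaInvMap_pos, sigmaInvMap_neg,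
        Prod.ext_iff, eq_comm, *]
      try simp only [hphi' φ₁ hφ₁ a c, hphi' φ₁ hφ₁ a e, hphi' φ₁ hφ₁ c e]
      repeat' apply And.intro
      all_goals try first
        | rfl
        | abel1
        | (rw [← hφ₁]; congr 1; abel1)
        | (rw [show (e + φ₂ d - a : A) = -(a - φ₂ d - e) from by abel, hφ₁]; abel1)
        | (rw [show (e + φ₂ b - c : A) = -(c - φ₂ b - e) from by abel, hφ₁]; abel1)
        | (rw [show (c + φ₂ b - a : A) = -(a - φ₂ b - c) from by abel, hφ₁]; abel1)
        | (congr 1 <;> first | rfl | abel1 | (rw [← hφ₁]; congr 1; abel1))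
      skip
  · rcases eq_or_ne i k with rfl | hik
    · -- i = k ≠ j
      simp [sigmaMap_pos, sigmaMap_neg, sigmaInvMap_pos, sigmaInvMap_neg,
        Prod.ext_iff, eq_comm, *]
      try simp only [hphi' φ₁ hφ₁ a c, hphi' φ₁ hφ₁ a e, hphi' φ₁ hφ₁ c e]
      repeat' apply And.intro
      all_goals try first
        | rfl
        | abel1
        | (rw [← hφ₁]; congr 1; abel1)
        | (rw [show (e + φ₂ d - a : A) = -(a - φ₂ d - e) from by abel, hφ₁]; abel1)
        | (rw [show (e + φ₂ b - c : A) = -(c - φ₂ b - e) from by abel, hφ₁]; abel1)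
        | (rw [show (c + φ₂ b - a : A) = -(a - φ₂ b - c) from by abel, hφ₁]; abel1)
        | (congr 1 <;> first | rfl | abel1 | (rw [← hφ₁]; congr 1; abel1))
      skip
    · rcases eq_or_ne j k with rfl | hjk
      · -- j = k ≠ i
        simp [sigmaMap_pos, sigmaMap_neg, sigmaInvMap_pos, sigmaInvMap_neg,
          Prod.ext_iff, eq_comm, *]
        try simp only [hphi' φ₁ hφ₁ a c, hphi' φ₁ hφ₁ a e, hphi' φ₁ hφ₁ c e]
        repeat' apply And.intro
        all_goals try first
          | rfl
          | abel1
          | (rw [← hφ₁]; congr 1; abel1)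
          | (rw [show (e + φ₂ d - a : A) = -(a - φ₂ d - e) from by abel, hφ₁]; abel1)
          | (rw [show (e + φ₂ b - c : A) = -(c - φ₂ b - e) from by abel, hφ₁]; abel1)
          | (rw [show (c + φ₂ b - a : A) = -(a - φ₂ b - c) from by abel, hφ₁]; abel1)
          | (congr 1 <;> first | rfl | abel1 | (rw [← hφ₁]; congr 1; abel1))
        skip
      · -- all distinct
        simp [sigmaMap_pos, sigmaMap_neg, sigmaInvMap_pos, sigmaInvMap_neg,
          Prod.ext_iff, eq_comm, *]
        try simp only [hphi' φ₁ hφ₁ a c, hphi' φ₁ hφ₁ a e, hphi' φ₁ hφ₁ c e]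
        repeat' apply And.intro
        all_goals try first
          | rfl
          | abel1
          | (rw [← hφ₁]; congr 1; abel1)
          | (rw [show (e + φ₂ d - a : A) = -(a - φ₂ d - e) from by abel, hφ₁]; abel1)
          | (rw [show (e + φ₂ b - c : A) = -(c - φ₂ b - e) from by abel, hφ₁]; abel1)
          | (rw [show (c + φ₂ b - a : A) = -(a - φ₂ b - c) from by abel, hφ₁]; abel1)
          | (congr 1 <;> first | rfl | abel1 | (rw [← hφ₁]; congr 1; abel1))
        skip

end Aux

/-- `σ_p ∘ σ_{σ⁻¹_p(q)} = σ_q ∘ σ_{σ⁻¹_q(p)}`, and consequently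
`r(x,y) = (σ_x(y), σ⁻¹_{σ_x(y)}(x))` is an involutive non-degenerate set-theoretic
solution of the Yang–Baxter equation. -/
theorem stmt8 {A B I : Type*} [AddCommGroup A] [AddCommGroup B] [DecidableEq I]
    [Nontrivial A] [Nontrivial B] [Nontrivial I]
    (φ₁ : A → B) (hφ₁ : ∀ a : A, φ₁ (-a) = φ₁ a) (φ₂ : B →+ A)
    (r : (A × B × I) × (A × B × I) → (A × B × I) × (A × B × I))
    (hr : ∀ p q : A × B × I,
      r (p, q) = (sigmaMap φ₁ φ₂ p q, sigmaInvMap φ₁ φ₂ (sigmaMap φ₁ φ₂ p q) p)) :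
    (∀ p q : A × B × I,
      sigmaMap φ₁ φ₂ p ∘ sigmaMap φ₁ φ₂ (sigmaInvMap φ₁ φ₂ p q) =
      sigmaMap φ₁ φ₂ q ∘ sigmaMap φ₁ φ₂ (sigmaInvMap φ₁ φ₂ q p)) ∧
    (∀ z : (A × B × I) × (A × B × I), r (r z) = z) ∧
    (∀ p : A × B × I, Function.Bijective (sigmaMap φ₁ φ₂ p)) ∧
    (∀ q : A × B × I,
      Function.Bijective (fun p => sigmaInvMap φ₁ φ₂ (sigmaMap φ₁ φ₂ p q) p)) ∧
    (∀ z : (A × B × I) × (A × B × I) × (A × B × I),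
      rTwelve r (rTwentyThree r (rTwelve r z)) = rTwentyThree r (rTwelve r (rTwentyThree r z))) := by
  refine ⟨sigma_comm φ₁ φ₂ hφ₁, ?_, sigma_bij φ₁ φ₂, T_bij φ₁ φ₂, ybe_aux φ₁ φ₂ hφ₁ r hr⟩
  rintro ⟨p, q⟩
  rw [hr, hr, sigma_right_inv, sigma_left_inv]
end

section
/- In the main construction, the strong twisted union identities hold: for distinct i, j ∈ I and all a, c, e ∈ A, b, d, f ∈ B, one has σ_{σ^{-1}_{(a,b,i)}(c,d,j)}(e,f,i) = σ_{(c,d,j)}(e,f,i) and σ^{-1}_{σ_{(e,f,j)}(c,d,i)}(a,b,j) = σ^{-1}_{(c,d,i)}(a,b,j). -/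
/-- The strong twisted union identities for distinct `i, j ∈ I`. -/
theorem stmt12 {A B I : Type*} [AddCommGroup A] [AddCommGroup B] [DecidableEq I]
    [Nontrivial A] [Nontrivial B] [Nontrivial I]
    (φ₁ : A → B) (hφ₁ : ∀ a : A, φ₁ (-a) = φ₁ a) (φ₂ : B →+ A)
    (i j : I) (hij : i ≠ j) :
    ∀ a c e : A, ∀ b d f : B,
      sigmaMap φ₁ φ₂ (sigmaInvMap φ₁ φ₂ (a, b, i) (c, d, j)) (e, f, i) =
        sigmaMap φ₁ φ₂ (c, d, j) (e, f, i) ∧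
      sigmaInvMap φ₁ φ₂ (sigmaMap φ₁ φ₂ (e, f, j) (c, d, i)) (a, b, j) =
        sigmaInvMap φ₁ φ₂ (c, d, i) (a, b, j) := by
  intro a c e b d f
  simp [sigmaMap, sigmaInvMap, hij, hij.symm]
end

section
/- In the main construction, if φ₁(A) generates B as a group and φ₂ is surjective, then the orbits of X(A,B,I) under the group G generated by { σ_{(a,b,i)} : a ∈ A, b ∈ B, i ∈ I } are exactly the sets X_i = A × B × {i}, i ∈ I. -/
/-- `σ_{(a,b,i)}` as a permutation. -/
def sigmaPerm {A B I : Type*} [AddCommGroup A] [AddCommGroup B] [DecidableEq I]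
    (φ₁ : A → B) (φ₂ : B →+ A) (p : A × B × I) : Equiv.Perm (A × B × I) where
  toFun := sigmaMap φ₁ φ₂ p
  invFun := sigmaInvMap φ₁ φ₂ p
  left_inv q := by
    unfold sigmaMap sigmaInvMap
    split_ifs with h <;> simp [h]
  right_inv q := by
    unfold sigmaMap sigmaInvMap
    split_ifs with h <;> simp [h]

/-- If `φ₁(A)` generates `B` and `φ₂` is surjective, then the orbits of `X(A,B,I)` under
the permutation group generated by the `σ`'s are exactly the sets `X_i = A × B × {i}`:
two points lie in the same orbit iff they have the same third coordinate. -/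
theorem stmt13 {A B I : Type*} [AddCommGroup A] [AddCommGroup B] [DecidableEq I]
    [Nontrivial A] [Nontrivial B] [Nontrivial I]
    (φ₁ : A → B) (hφ₁ : ∀ a : A, φ₁ (-a) = φ₁ a) (φ₂ : B →+ A)
    (hgen : AddSubgroup.closure (Set.range φ₁) = (⊤ : AddSubgroup B))
    (hsur : Function.Surjective φ₂)
    (S : Set (Equiv.Perm (A × B × I)))
    (hS : S = {g : Equiv.Perm (A × B × I) | ∃ p : A × B × I,
      ∀ q : A × B × I, g q = sigmaMap φ₁ φ₂ p q}) :
    ∀ p q : A × B × I,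
      (∃ g ∈ Subgroup.closure S, g p = q) ↔ p.2.2 = q.2.2 := by
  -- generators preserve the third coordinate
  have hSpres : ∀ g ∈ S, ∀ x : A × B × I, (g x).2.2 = x.2.2 := by
    intro g hg x
    rw [hS] at hg
    obtain ⟨p, hp⟩ := hg
    rw [hp x]
    unfold sigmaMap
    split_ifs <;> rfl
  have hσS : ∀ p : A × B × I, sigmaPerm φ₁ φ₂ p ∈ Subgroup.closure S := by
    intro p
    apply Subgroup.subset_closure
    rw [hS]
    exact ⟨p, fun q => rfl⟩
  set R := fun p q : A × B × I => ∃ g ∈ Subgroup.closure S, g p = q with hR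
  have htrans : ∀ p q r, R p q → R q r → R p r := by
    rintro p q r ⟨g, hg, rfl⟩ ⟨h, hh, rfl⟩
    exact ⟨h * g, mul_mem hh hg, rfl⟩
  have hsymm : ∀ p q, R p q → R q p := by
    rintro p q ⟨g, hg, rfl⟩
    exact ⟨g⁻¹, inv_mem hg, g.symm_apply_apply p⟩
  have hstep1 : ∀ (c : A) (d : B) (j : I) (b : B), R (c, d, j) (c + φ₂ b, d, j) := by
    intro c d j b
    obtain ⟨i, hi⟩ := exists_ne j
    refine ⟨sigmaPerm φ₁ φ₂ (0, b, i), hσS _, ?_⟩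
    show sigmaMap φ₁ φ₂ (0, b, i) (c, d, j) = _
    unfold sigmaMap
    simp [hi]
  have hstep2 : ∀ (c : A) (d : B) (j : I) (a : A), R (c, d, j) (c, d + φ₁ a, j) := by
    intro c d j a
    refine ⟨sigmaPerm φ₁ φ₂ (a + c, 0, j), hσS _, ?_⟩
    show sigmaMap φ₁ φ₂ (a + c, 0, j) (c, d, j) = _
    unfold sigmaMap
    simp
  have hB : ∀ (t : B) (c : A) (d : B) (j : I), R (c, d, j) (c, d + t, j) := by
    intro t
    have ht : t ∈ AddSubgroup.closure (Set.range φ₁) := by rw [hgen]; trivial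
    induction ht using AddSubgroup.closure_induction with
    | mem x hx =>
      obtain ⟨a, rfl⟩ := hx
      exact fun c d j => hstep2 c d j a
    | zero => intro c d j; simpa using ⟨1, one_mem _, rfl⟩
    | add x y _ _ hx hy =>
      intro c d j
      have := htrans _ _ _ (hx c d j) (hy c (d + x) j)
      simpa [add_assoc] using this
    | neg x _ hx =>
      intro c d j
      have := hsymm _ _ (hx c (d + -x) j)
      simpa using this
  intro p q
  constructor
  · rintro ⟨g, hg, rfl⟩
    refine (Subgroup.closure_induction (p := fun g _ => ∀ x : A × B × I, (g x).2.2 = x.2.2)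
      hSpres (fun x => rfl) ?_ ?_ hg p).symm
    · intro a b _ _ ha hb x
      simpa using (ha (b x)).trans (hb x)
    · intro a _ ha x
      have := ha (a⁻¹ x)
      simpa using this.symm
  · obtain ⟨c, d, j⟩ := p
    obtain ⟨c', d', j'⟩ := q
    intro h
    simp only at h
    subst h
    obtain ⟨b, hb⟩ := hsur (c' - c)
    have h1 : R (c, d, j) (c', d, j) := by
      have := hstep1 c d j b
      rwa [hb, add_sub_cancel] at this
    have h2 : R (c', d, j) (c', d', j) := by
      have := hB (d' - d) c' d j
      rwa [add_sub_cancel] at this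
    exact htrans _ _ _ h1 h2
end

section
/- Let (X,r) be a finite solution of the YBE with r(x,y) = (σ_x(y), σ^{-1}_{σ_x(y)}(x)). If (X,r) is irretractable (σ_x = σ_y implies x = y), then the natural left brace structure on the permutation group G(X,r) = ⟨σ_x : x ∈ X⟩ has trivial socle. -/
/-- If `(X,r)` is a finite irretractable solution of the YBE, with
`r(x,y) = (σ_x(y), σ⁻¹_{σ_x(y)}(x))`, then the natural left brace structure on the
permutation group `G = ⟨σ_x : x ∈ X⟩` (any brace structure whose multiplication is
composition of permutations and whose `λ`-maps satisfy `λ_g(σ_x) = σ_{g(x)}`) has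
trivial socle. -/
theorem stmt14 {X : Type*} [Finite X] (σ : X → Equiv.Perm X)
    (hsol : ∀ x y : X, σ x * σ ((σ x)⁻¹ y) = σ y * σ ((σ y)⁻¹ x))
    (hirr : ∀ x y : X, σ x = σ y → x = y)
    (G : Subgroup (Equiv.Perm X)) (hG : G = Subgroup.closure (Set.range σ))
    (add : G → G → G) (neg : G → G)
    (hadd_comm : ∀ g h : G, add g h = add h g)
    (hadd_assoc : ∀ g h k : G, add (add g h) k = add g (add h k))
    (hadd_zero : ∀ g : G, add g 1 = g)
    (hadd_neg : ∀ g : G, add g (neg g) = 1)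
    (hbrace : ∀ a b c : G, add (a * add b c) a = add (a * b) (a * c))
    (hlam : ∀ (g : G) (x : X) (hx : σ x ∈ G),
      ((add (g * ⟨σ x, hx⟩) (neg g) : G) : Equiv.Perm X) = σ ((g : Equiv.Perm X) x)) :
    ∀ g : G, (∀ h : G, g * h = add g h) → g = 1 := by
  intro g hg
  have hmem : ∀ x : X, σ x ∈ G := by
    intro x
    rw [hG]
    exact Subgroup.subset_closure ⟨x, rfl⟩
  have hfix : ∀ x : X, (g : Equiv.Perm X) x = x := by
    intro x
    have h1 : add (g * ⟨σ x, hmem x⟩) (neg g) = ⟨σ x, hmem x⟩ := by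
      rw [hg ⟨σ x, hmem x⟩, hadd_comm g ⟨σ x, hmem x⟩, hadd_assoc,
        hadd_neg, hadd_zero]
    have h2 := hlam g x (hmem x)
    rw [h1] at h2
    exact (hirr _ _ h2).symm
  ext x
  exact hfix x
end

section
/- Let (X,r) be a solution of the YBE, {X_i}_{i∈I} the orbits of X under the permutation group, and G_i the multiplicative subgroup of the structure group G(X,r) generated by X_i. Then G_i equals the additive subgroup of G(X,r) generated by X_i; in particular G_i is a subbrace of G(X,r) invariant under all λ_g, g ∈ G(X,r), and G_iG_j = G_jG_i for all i, j ∈ I. -/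
/-- A left brace: an abelian group `(B,+)` and a group `(B,·)` such that
`a·(b+c) + a = a·b + a·c`. -/
class LeftBrace (B : Type*) extends AddCommGroup B, Group B where
  mul_add_distrib : ∀ a b c : B, a * (b + c) + a = a * b + a * c

namespace LBaux

variable {G : Type*} [LeftBrace G]

def lam (g a : G) : G := g * a - g

lemma one_eq_zero : (1 : G) = 0 := by
  have h := LeftBrace.mul_add_distrib (1 : G) 0 0
  simpa using h

lemma lam_add (g a b : G) : lam g (a + b) = lam g a + lam g b := by
  have h := LeftBrace.mul_add_distrib g a b
  have h2 : g * (a + b) = g * a + g * b - g := by rw [← h]; abel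
  unfold lam; rw [h2]; abel

lemma lam_zero (g : G) : lam g 0 = 0 := by
  unfold lam; rw [← one_eq_zero, mul_one, sub_self, one_eq_zero]

lemma lam_neg (g a : G) : lam g (-a) = - lam g a := by
  have h : lam g (a + (-a)) = lam g a + lam g (-a) := lam_add g a (-a)
  rw [add_neg_cancel, lam_zero] at h
  exact eq_neg_of_add_eq_zero_right h.symm

lemma mul_eq_add_lam (g a : G) : g * a = g + lam g a := by
  unfold lam; abel

lemma lam_lam (g h a : G) : lam g (lam h a) = lam (g * h) a := by
  have e : lam h a = h * a + (-h) := by unfold lam; abel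
  rw [e, lam_add, lam_neg]
  unfold lam
  rw [mul_assoc]; abel

lemma lam_one (a : G) : lam 1 a = a := by
  unfold lam; rw [one_mul, one_eq_zero, sub_zero]

lemma inv_eq_neg_lam (a : G) : a⁻¹ = - lam a⁻¹ a := by
  have h : a⁻¹ * a = a⁻¹ + lam a⁻¹ a := mul_eq_add_lam a⁻¹ a
  rw [inv_mul_cancel, one_eq_zero] at h
  exact eq_neg_of_add_eq_zero_left h.symm

lemma lam_inv (g a : G) : lam g a⁻¹ = - lam (g * a⁻¹) a := by
  conv_lhs => rw [inv_eq_neg_lam a, lam_neg, lam_lam]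

lemma add_eq_mul_lam (u v : G) : u + v = u * lam u⁻¹ v := by
  rw [mul_eq_add_lam, lam_lam, mul_inv_cancel, lam_one]

/-- If `Y` is invariant under all `λ_g`, then for `y ∈ Y`, `-y` is the inverse of an
element of `Y`, hence lies in the multiplicative closure of `Y`. -/
lemma neg_mem_closure {Y : Set G} (hYinv : ∀ g y, y ∈ Y → lam g y ∈ Y)
    {y : G} (hy : y ∈ Y) : -y ∈ Subgroup.closure Y := by
  set b : G := (-y)⁻¹ with hbdef
  have h1 : b = - lam b (-y) := inv_eq_neg_lam (-y)
  rw [lam_neg, neg_neg] at h1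
  have hbY : b ∈ Y := h1 ▸ hYinv b y hy
  have h2 : -y = b⁻¹ := (inv_inv (-y)).symm
  rw [h2]
  exact inv_mem (Subgroup.subset_closure hbY)

/-- Key lemma: the multiplicative closure of a `λ`-invariant set is `λ`-invariant,
and closed under negation of `λ`-images. -/
lemma lam_mem_closure {Y : Set G} (hYinv : ∀ g y, y ∈ Y → lam g y ∈ Y) :
    ∀ a ∈ Subgroup.closure Y, ∀ g : G,
      lam g a ∈ Subgroup.closure Y ∧ - lam g a ∈ Subgroup.closure Y := by
  set S := Subgroup.closure Y with hS
  let S' : Subgroup G :=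
    { carrier := {a : G | ∀ g : G, lam g a ∈ S ∧ - lam g a ∈ S}
      one_mem' := by
        intro g
        have h1 : lam g (1 : G) = 0 := by rw [one_eq_zero, lam_zero]
        constructor
        · rw [h1, ← one_eq_zero]; exact S.one_mem
        · rw [h1, neg_zero, ← one_eq_zero]; exact S.one_mem
      mul_mem' := by
        intro a b ha hb
        intro g
        have e1 : lam g (a * b) = lam g a + lam (g * a) b := by
          rw [mul_eq_add_lam a b, lam_add, lam_lam]
        constructor
        · rw [e1, add_eq_mul_lam, lam_lam]
          exact mul_mem (ha g).1 (hb _).1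
        · have e2 : ∀ c : G, lam c (-lam (g * a) b) = -lam (c * (g * a)) b := by
            intro c; rw [← lam_neg, lam_lam, lam_neg]
          rw [e1, neg_add, add_eq_mul_lam, e2]
          exact mul_mem (ha g).2 (hb _).2
      inv_mem' := by
        intro a ha g
        constructor
        · rw [lam_inv]; exact (ha _).2
        · rw [lam_inv, neg_neg]; exact (ha _).1 }
  have hle : S ≤ S' := by
    rw [hS]
    apply Subgroup.closure_le S' |>.mpr
    intro y hy g
    exact ⟨Subgroup.subset_closure (hYinv g y hy),
      neg_mem_closure hYinv (hYinv g y hy)⟩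
  exact fun a ha g => hle ha g

lemma neg_mem_S {Y : Set G} (hYinv : ∀ g y, y ∈ Y → lam g y ∈ Y)
    {a : G} (ha : a ∈ Subgroup.closure Y) : -a ∈ Subgroup.closure Y := by
  have h := (lam_mem_closure hYinv a ha 1).2
  rwa [lam_one] at h

lemma add_mem_S {Y : Set G} (hYinv : ∀ g y, y ∈ Y → lam g y ∈ Y)
    {a b : G} (ha : a ∈ Subgroup.closure Y) (hb : b ∈ Subgroup.closure Y) :
    a + b ∈ Subgroup.closure Y := by
  rw [add_eq_mul_lam]
  exact mul_mem ha (lam_mem_closure hYinv b hb a⁻¹).1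

end LBaux

open LBaux

/-- Setting: `G` is the structure group of a solution `(X,r)` viewed as a left brace
whose additive group is free abelian with basis `X`, with `λ_g(X) ⊆ X`
(`λ_g(h) = g·h − g`).  If `Y` and `Z` are orbits of `X` under the permutation group
(the orbit of `x₀ ∈ X` is `{λ_g(x₀) : g ∈ G}`), then the multiplicative subgroup
generated by `Y` equals the additive subgroup generated by `Y` (so it is a subbrace),
it is invariant under all `λ_g`, and `G_Y G_Z = G_Z G_Y`. -/
theorem stmt16 {G : Type*} [LeftBrace G] (X : Set G)
    (hgen : Subgroup.closure X = (⊤ : Subgroup G))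
    (hbasis : ∀ g : G, ∃! f : X →₀ ℤ, g = f.sum fun x n => n • (x : G))
    (hlamX : ∀ g : G, ∀ x ∈ X, g * x - g ∈ X)
    (Y Z : Set G)
    (hY : ∃ x ∈ X, Y = {y : G | ∃ g : G, g * x - g = y})
    (hZ : ∃ x ∈ X, Z = {y : G | ∃ g : G, g * x - g = y}) :
    ((Subgroup.closure Y : Set G) = (AddSubgroup.closure Y : Set G)) ∧
    (∀ g : G, ∀ h ∈ Subgroup.closure Y, g * h - g ∈ Subgroup.closure Y) ∧
    (∀ a ∈ Subgroup.closure Y, ∀ b ∈ Subgroup.closure Z,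
      ∃ b' ∈ Subgroup.closure Z, ∃ a' ∈ Subgroup.closure Y, a * b = b' * a') := by
  -- orbit invariance
  have orbit_inv : ∀ (W : Set G), (∃ x ∈ X, W = {y : G | ∃ g : G, g * x - g = y}) →
      ∀ g y, y ∈ W → lam g y ∈ W := by
    rintro W ⟨x, -, rfl⟩ g y ⟨h, rfl⟩
    exact ⟨g * h, (lam_lam g h x).symm⟩
  have hYinv := orbit_inv Y hY
  have hZinv := orbit_inv Z hZ
  refine ⟨?_, ?_, ?_⟩
  · -- multiplicative closure = additive closure
    apply Set.Subset.antisymm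
    · -- closure Y ⊆ add closure Y : the additive closure is a mult subgroup
      have lamA : ∀ g : G, ∀ a ∈ AddSubgroup.closure Y, lam g a ∈ AddSubgroup.closure Y := by
        intro g a ha
        induction ha using AddSubgroup.closure_induction with
        | mem y hy => exact AddSubgroup.subset_closure (hYinv g y hy)
        | zero => rw [lam_zero]; exact AddSubgroup.zero_mem _
        | add a b _ _ iha ihb => rw [lam_add]; exact AddSubgroup.add_mem _ iha ihb
        | neg a _ iha => rw [lam_neg]; exact AddSubgroup.neg_mem _ iha
      let M : Subgroup G :=
        { carrier := (AddSubgroup.closure Y : Set G)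
          one_mem' := by
            show (1 : G) ∈ AddSubgroup.closure Y
            rw [one_eq_zero]; exact AddSubgroup.zero_mem _
          mul_mem' := by
            intro a b ha hb
            show a * b ∈ AddSubgroup.closure Y
            rw [mul_eq_add_lam]
            exact AddSubgroup.add_mem _ ha (lamA a b hb)
          inv_mem' := by
            intro a ha
            show a⁻¹ ∈ AddSubgroup.closure Y
            rw [inv_eq_neg_lam]
            exact AddSubgroup.neg_mem _ (lamA a⁻¹ a ha) }
      have : Subgroup.closure Y ≤ M :=
        (Subgroup.closure_le M).mpr AddSubgroup.subset_closure
      exact fun a ha => this ha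
    · -- add closure Y ⊆ closure Y
      intro a ha
      replace ha : a ∈ AddSubgroup.closure Y := ha
      induction ha using AddSubgroup.closure_induction with
      | mem y hy => exact Subgroup.subset_closure hy
      | zero => rw [← one_eq_zero]; exact Subgroup.one_mem _
      | add a b _ _ iha ihb => exact add_mem_S hYinv iha ihb
      | neg a _ iha => exact neg_mem_S hYinv iha
  · intro g h hh
    exact (lam_mem_closure hYinv h hh g).1
  · intro a ha b hb
    refine ⟨lam a b, (lam_mem_closure hZinv b hb a).1,
      lam (lam a b)⁻¹ a, (lam_mem_closure hYinv a ha (lam a b)⁻¹).1, ?_⟩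
    rw [mul_eq_add_lam a b, mul_eq_add_lam (lam a b), lam_lam, mul_inv_cancel, lam_one]
    abel
end

section
/- Let (X,r) be a solution of the YBE with orbits {X_i}_{i∈I} (I well-ordered) and G_i the subgroup of the structure group generated by X_i. Then H = { g₁⋯g_n : g_l ∈ G_{i_l}, i₁ < ⋯ < i_n in I, deg(g_l) = 0 } is an ideal of the left brace G(X,r), i.e. a normal subgroup of the multiplicative group invariant under all λ_g. -/
namespace LeftBraceAux

variable {G : Type*} [LeftBrace G]

/-- The lambda map of a left brace. -/
def lam (g a : G) : G := g * a - g

lemma lb_mul_zero (a : G) : a * (0 : G) = a := by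
  have h := LeftBrace.mul_add_distrib a 0 0
  rw [add_zero] at h
  exact (add_left_cancel h).symm

lemma lb_one_eq_zero : (1 : G) = 0 := by
  have h := lb_mul_zero (1 : G)
  rw [one_mul] at h
  exact h.symm

lemma lam_add (g a b : G) : lam g (a + b) = lam g a + lam g b := by
  have h := LeftBrace.mul_add_distrib g a b
  have h2 : g * (a + b) = g * a + g * b - g := eq_sub_of_add_eq h
  simp only [lam, h2]
  abel

lemma lam_zero (g : G) : lam g (0 : G) = 0 := by
  simp [lam, lb_mul_zero]

lemma lam_one (g : G) : lam g (1 : G) = 1 := by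
  rw [lb_one_eq_zero, lam_zero]

lemma mul_eq_add_lam (g a : G) : g * a = g + lam g a := by
  simp [lam]

lemma lam_neg (g a : G) : lam g (-a) = - lam g a := by
  have h := lam_add g a (-a)
  rw [add_neg_cancel, lam_zero] at h
  exact eq_neg_of_add_eq_zero_right h.symm

lemma lam_lam (g h a : G) : lam g (lam h a) = lam (g * h) a := by
  have h1 := lam_add g (h * a - h) h
  rw [sub_add_cancel] at h1
  have h2 : lam g (h * a - h) = lam g (h * a) - lam g h := eq_sub_of_add_eq h1.symm
  show lam g (h * a - h) = lam (g * h) a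
  rw [h2]
  simp only [lam, mul_assoc]
  abel

lemma lam_one_left (a : G) : lam (1 : G) a = a := by
  rw [lam, one_mul, lb_one_eq_zero, sub_zero]

lemma add_eq_mul_lam (a b : G) : a + b = a * lam a⁻¹ b := by
  rw [mul_eq_add_lam a (lam a⁻¹ b), lam_lam, mul_inv_cancel, lam_one_left]

lemma lam_inv (g a : G) : lam g a⁻¹ = -(lam (g * a⁻¹) a) := by
  have h : (1 : G) = a⁻¹ + lam a⁻¹ a := by
    rw [← mul_eq_add_lam, inv_mul_cancel]
  have h2 := lam_add g a⁻¹ (lam a⁻¹ a)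
  rw [← h, lam_one, lam_lam, lb_one_eq_zero] at h2
  exact eq_neg_of_add_eq_zero_left h2.symm

lemma inv_neg_eq_lam (y : G) : (-y)⁻¹ = lam (-y)⁻¹ y := by
  have h : (-y)⁻¹ * (-y) = (-y)⁻¹ + lam (-y)⁻¹ (-y) := mul_eq_add_lam _ _
  rw [inv_mul_cancel, lam_neg, lb_one_eq_zero] at h
  exact add_neg_eq_zero.mp h.symm

lemma lam_mul (g a b : G) :
    lam g (a * b) = lam g a * lam ((lam g a)⁻¹ * (g * a)) b := by
  rw [mul_eq_add_lam a b, lam_add, lam_lam, add_eq_mul_lam, lam_lam]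

lemma mul_gen (g y : G) : g * y = (lam g y) * lam (lam g y)⁻¹ g := by
  rw [mul_eq_add_lam g y, add_comm, add_eq_mul_lam]

/-- pushing `g` past an inverse generator. -/
lemma lam_inv_gen (k y : G) :
    ∃ w : G, w = lam w (lam (k * y⁻¹) y) ∧ lam k y⁻¹ = w⁻¹ := by
  refine ⟨(-(lam (k * y⁻¹) y))⁻¹, ?_, ?_⟩
  · exact inv_neg_eq_lam _
  · rw [lam_inv]
    exact (inv_inv _).symm

lemma mul_gen_inv (g y : G) :
    ∃ w : G, w = lam w (lam (g * y⁻¹) y) ∧ g * y⁻¹ = w⁻¹ * lam w g := by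
  obtain ⟨w, hw, hlam⟩ := lam_inv_gen g y
  refine ⟨w, hw, ?_⟩
  rw [mul_eq_add_lam g y⁻¹, hlam, add_comm, add_eq_mul_lam, inv_inv]

end LeftBraceAux

open LeftBraceAux in
/-- Setting: `G` is the structure group of a solution `(X,r)` viewed as a left brace whose
additive group is free abelian with basis `X`, with `λ_g(X) ⊆ X` (`λ_g(h) = g·h − g`),
equipped with the degree function `d` (`d(g·h) = d(g)+d(h)`, `d(x) = 1` on `X`).
The set `H` of products of degree-zero elements of the orbit subgroups
`G_i = ⟨{λ_g(x) : g ∈ G}⟩` is an ideal of the left brace `G`: a normal subgroup of the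
multiplicative group that is invariant under all `λ_g`. -/
theorem stmt17 {G : Type*} [LeftBrace G] (X : Set G)
    (hgen : Subgroup.closure X = (⊤ : Subgroup G))
    (hbasis : ∀ g : G, ∃! f : X →₀ ℤ, g = f.sum fun x n => n • (x : G))
    (hlamX : ∀ g : G, ∀ x ∈ X, g * x - g ∈ X)
    (d : G → ℤ)
    (hd : ∀ g h : G, d (g * h) = d g + d h)
    (hdX : ∀ x ∈ X, d x = 1)
    (H : Set G)
    (hH : H = {h : G | ∃ l : List G, h = l.prod ∧ ∀ g ∈ l,
      d g = 0 ∧ ∃ x ∈ X, g ∈ Subgroup.closure {y : G | ∃ k : G, k * x - k = y}}) :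
    ((1 : G) ∈ H) ∧
    (∀ a ∈ H, ∀ b ∈ H, a * b ∈ H) ∧
    (∀ a ∈ H, a⁻¹ ∈ H) ∧
    (∀ g : G, ∀ a ∈ H, g * a * g⁻¹ ∈ H) ∧
    (∀ g : G, ∀ a ∈ H, g * a - g ∈ H) := by
  subst hH
  set Y : G → Set G := fun x => {y : G | ∃ k : G, k * x - k = y} with hY
  -- basic facts
  have d1 : d (1 : G) = 0 := by have := hd 1 1; rw [one_mul] at this; linarith
  have dinv : ∀ a : G, d a⁻¹ = -d a := by
    intro a
    have := hd a a⁻¹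
    rw [mul_inv_cancel, d1] at this
    linarith
  have hYlam : ∀ x : G, ∀ j : G, ∀ y ∈ Y x, lam j y ∈ Y x := by
    rintro x j y ⟨k, hk⟩
    exact ⟨j * k, by
      show lam (j * k) x = lam j y
      rw [← lam_lam, show lam k x = y from hk]⟩
  have hYself : ∀ x : G, x ∈ Y x := by
    intro x
    exact ⟨1, by rw [show (1:G) * x - 1 = lam 1 x from rfl, lam_one_left]⟩
  have hYX : ∀ x ∈ X, Y x ⊆ X := by
    rintro x hx y ⟨k, hk⟩
    exact hk ▸ hlamX k x hx
  have hYd : ∀ x ∈ X, ∀ y ∈ Y x, d y = 1 := fun x hx y hy => hdX y (hYX x hx hy)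
  -- word representations for closure membership
  have hword : ∀ (x : G) (h : G), h ∈ Subgroup.closure (Y x) →
      ∃ l : List G, (∀ a ∈ l, a ∈ Y x ∨ a⁻¹ ∈ Y x) ∧ l.prod = h := by
    intro x h hh
    have : h ∈ Submonoid.closure (Y x ∪ (Y x)⁻¹) := by
      rw [← Subgroup.closure_toSubmonoid]
      exact hh
    obtain ⟨l, hl, hlp⟩ := Submonoid.exists_list_of_mem_closure this
    refine ⟨l, ?_, hlp⟩
    intro a ha
    rcases hl a ha with h1 | h2
    · exact Or.inl h1
    · exact Or.inr (Set.mem_inv.mp h2)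
  -- Lemma B : pushing g through a word in the orbit subgroup
  have lemB : ∀ (x : G), x ∈ X → ∀ (l : List G), (∀ a ∈ l, a ∈ Y x ∨ a⁻¹ ∈ Y x) →
      ∀ g : G, ∃ v k : G, g * l.prod = v * lam k g ∧
        v ∈ Subgroup.closure (Y x) ∧ d v = d l.prod := by
    intro x hx l
    induction l with
    | nil =>
        intro _ g
        exact ⟨1, 1, by rw [List.prod_nil, mul_one, one_mul, lam_one_left], one_mem _, rfl⟩
    | cons a l ih =>
        intro hal g
        have hal' : ∀ b ∈ l, b ∈ Y x ∨ b⁻¹ ∈ Y x := fun b hb => hal b (List.mem_cons_of_mem a hb)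
        rcases hal a (List.mem_cons_self) with hA | hA
        · -- a ∈ Y x
          obtain ⟨v₁, k₁, h1, h2, h3⟩ := ih hal' (lam (lam g a)⁻¹ g)
          refine ⟨lam g a * v₁, k₁ * (lam g a)⁻¹, ?_, ?_, ?_⟩
          · rw [List.prod_cons, ← mul_assoc, mul_gen g a, mul_assoc, h1, mul_assoc, lam_lam]
          · exact mul_mem (Subgroup.subset_closure (hYlam x g a hA)) h2
          · rw [hd, h3, List.prod_cons, hd, hYd x hx _ (hYlam x g a hA),
              hYd x hx a hA]
        · -- a⁻¹ ∈ Y x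
          obtain ⟨w, hw, hgw⟩ := mul_gen_inv g a⁻¹
          rw [inv_inv] at hgw hw
          have hwY : w ∈ Y x := by
            rw [hw]
            exact hYlam x w _ (hYlam x (g * a) _ hA)
          obtain ⟨v₁, k₁, h1, h2, h3⟩ := ih hal' (lam w g)
          refine ⟨w⁻¹ * v₁, k₁ * w, ?_, ?_, ?_⟩
          · rw [List.prod_cons, ← mul_assoc, hgw, mul_assoc, h1, mul_assoc, lam_lam]
          · exact mul_mem (inv_mem (Subgroup.subset_closure hwY)) h2
          · rw [List.prod_cons, hd, hd, h3]
            have e2 := dinv w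
            have e3 := hYd x hx w hwY
            have e4 := dinv a
            have e5 := hYd x hx a⁻¹ hA
            omega
  -- Lemma D : lambda-invariance of degree-marked orbit subgroup words
  have lemD : ∀ (x : G), x ∈ X → ∀ (l : List G), (∀ a ∈ l, a ∈ Y x ∨ a⁻¹ ∈ Y x) →
      ∀ k : G, lam k l.prod ∈ Subgroup.closure (Y x) ∧ d (lam k l.prod) = d l.prod := by
    intro x hx l
    induction l with
    | nil =>
        intro _ k
        rw [List.prod_nil, lam_one]
        exact ⟨one_mem _, rfl⟩
    | cons a l ih =>
        intro hal k
        have hal' : ∀ b ∈ l, b ∈ Y x ∨ b⁻¹ ∈ Y x := fun b hb => hal b (List.mem_cons_of_mem a hb)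
        rw [List.prod_cons, lam_mul]
        rcases hal a (List.mem_cons_self) with hA | hA
        · obtain ⟨ih1, ih2⟩ := ih hal' ((lam k a)⁻¹ * (k * a))
          have hmem : lam k a ∈ Y x := hYlam x k a hA
          constructor
          · exact mul_mem (Subgroup.subset_closure hmem) ih1
          · rw [hd, ih2, hd, hYd x hx _ hmem, hYd x hx a hA]
        · obtain ⟨w, hw, hlw⟩ := lam_inv_gen k a⁻¹
          rw [inv_inv] at hw hlw
          have hwY : w ∈ Y x := by
            rw [hw]
            exact hYlam x w _ (hYlam x (k * a) _ hA)
          rw [hlw]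
          obtain ⟨ih1, ih2⟩ := ih hal' (w⁻¹⁻¹ * (k * a))
          constructor
          · exact mul_mem (inv_mem (Subgroup.subset_closure hwY)) ih1
          · rw [hd, hd, ih2]
            have e2 := dinv w
            have e3 := hYd x hx w hwY
            have e4 := dinv a
            have e5 := hYd x hx a⁻¹ hA
            omega
  -- the five goals
  have h1H : (1 : G) ∈ {h : G | ∃ l : List G, h = l.prod ∧ ∀ g ∈ l,
      d g = 0 ∧ ∃ x ∈ X, g ∈ Subgroup.closure (Y x)} :=
    ⟨[], by simp⟩
  have hmulH : ∀ a ∈ {h : G | ∃ l : List G, h = l.prod ∧ ∀ g ∈ l,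
      d g = 0 ∧ ∃ x ∈ X, g ∈ Subgroup.closure (Y x)},
      ∀ b ∈ {h : G | ∃ l : List G, h = l.prod ∧ ∀ g ∈ l,
      d g = 0 ∧ ∃ x ∈ X, g ∈ Subgroup.closure (Y x)},
      a * b ∈ {h : G | ∃ l : List G, h = l.prod ∧ ∀ g ∈ l,
      d g = 0 ∧ ∃ x ∈ X, g ∈ Subgroup.closure (Y x)} := by
    rintro a ⟨la, rfl, hla⟩ b ⟨lb, rfl, hlb⟩
    refine ⟨la ++ lb, (List.prod_append).symm, ?_⟩
    intro g hg
    rcases List.mem_append.mp hg with h | h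
    · exact hla g h
    · exact hlb g h
  have hinvH : ∀ a ∈ {h : G | ∃ l : List G, h = l.prod ∧ ∀ g ∈ l,
      d g = 0 ∧ ∃ x ∈ X, g ∈ Subgroup.closure (Y x)},
      a⁻¹ ∈ {h : G | ∃ l : List G, h = l.prod ∧ ∀ g ∈ l,
      d g = 0 ∧ ∃ x ∈ X, g ∈ Subgroup.closure (Y x)} := by
    rintro a ⟨la, rfl, hla⟩
    refine ⟨(la.map (fun z => z⁻¹)).reverse, List.prod_inv_reverse la, ?_⟩
    intro g hg
    rw [List.mem_reverse, List.mem_map] at hg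
    obtain ⟨z, hz, rfl⟩ := hg
    obtain ⟨hdz, x, hxX, hzc⟩ := hla z hz
    exact ⟨by rw [dinv, hdz, neg_zero], x, hxX, inv_mem hzc⟩
  -- single-factor membership helper
  have hsingle : ∀ (v : G) (x : G), x ∈ X → v ∈ Subgroup.closure (Y x) → d v = 0 →
      v ∈ {h : G | ∃ l : List G, h = l.prod ∧ ∀ g ∈ l,
      d g = 0 ∧ ∃ x ∈ X, g ∈ Subgroup.closure (Y x)} := by
    intro v x hx hv hdv
    exact ⟨[v], by simp, by
      intro g hg
      rw [List.mem_singleton] at hg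
      subst hg
      exact ⟨hdv, x, hx, hv⟩⟩
  refine ⟨h1H, hmulH, hinvH, ?_, ?_⟩
  · -- normality
    -- P g : pushing lambdas of g past g⁻¹ lands in H
    set HH := {h : G | ∃ l : List G, h = l.prod ∧ ∀ g ∈ l,
      d g = 0 ∧ ∃ x ∈ X, g ∈ Subgroup.closure (Y x)} with hHH
    have conj : ∀ g : G, (∀ k : G, lam k g * g⁻¹ ∈ HH) → ∀ a ∈ HH, g * a * g⁻¹ ∈ HH := by
      intro g hp a ha
      obtain ⟨l, rfl, hl⟩ := ha
      induction l with
      | nil => simpa using h1H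
      | cons h l ih =>
          have hl' : ∀ b ∈ l, d b = 0 ∧ ∃ x ∈ X, b ∈ Subgroup.closure (Y x) :=
            fun b hb => hl b (List.mem_cons_of_mem h hb)
          obtain ⟨hdh, x, hxX, hhc⟩ := hl h (List.mem_cons_self)
          have key : g * h * g⁻¹ ∈ HH := by
            obtain ⟨lw, hlw, hlwp⟩ := hword x h hhc
            obtain ⟨v, k, he, hvc, hvd⟩ := lemB x hxX lw hlw g
            rw [hlwp] at he hvd
            have : g * h * g⁻¹ = v * (lam k g * g⁻¹) := by
              rw [← mul_assoc, ← he]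
            rw [this]
            exact hmulH v (hsingle v x hxX hvc (by rw [hvd, hdh])) _ (hp k)
          have : g * (h :: l).prod * g⁻¹ = (g * h * g⁻¹) * (g * l.prod * g⁻¹) := by
            rw [List.prod_cons]
            group
          rw [this]
          exact hmulH _ key _ (ih hl')
    have Pmul : ∀ a b : G, (∀ k : G, lam k a * a⁻¹ ∈ HH) → (∀ k : G, lam k b * b⁻¹ ∈ HH) →
        ∀ k : G, lam k (a * b) * (a * b)⁻¹ ∈ HH := by
      intro a b hpa hpb k
      rw [lam_mul, mul_inv_rev]
      have : lam k a * lam ((lam k a)⁻¹ * (k * a)) b * (b⁻¹ * a⁻¹) =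
          (lam k a * a⁻¹) * (a * (lam ((lam k a)⁻¹ * (k * a)) b * b⁻¹) * a⁻¹) := by
        group
      rw [this]
      exact hmulH _ (hpa k) _ (conj a hpa _ (hpb _))
    have Pgen : ∀ x ∈ X, ∀ k : G, lam k x * x⁻¹ ∈ HH := by
      intro x hx k
      refine hsingle _ x hx ?_ ?_
      · exact mul_mem (Subgroup.subset_closure (hYlam x k x (hYself x)))
          (inv_mem (Subgroup.subset_closure (hYself x)))
      · rw [hd, dinv, hYd x hx _ (hYlam x k x (hYself x)), hdX x hx]
        ring
    have Pgeninv : ∀ x ∈ X, ∀ k : G, lam k x⁻¹ * (x⁻¹)⁻¹ ∈ HH := by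
      intro x hx k
      obtain ⟨w, hw, hlw⟩ := lam_inv_gen k x
      have hwY : w ∈ Y x := by
        rw [hw]
        exact hYlam x w _ (hYlam x (k * x⁻¹) x (hYself x))
      rw [hlw, inv_inv]
      refine hsingle _ x hx ?_ ?_
      · exact mul_mem (inv_mem (Subgroup.subset_closure hwY))
          (Subgroup.subset_closure (hYself x))
      · rw [hd, dinv, hYd x hx w hwY, hdX x hx]
        ring
    have Qall : ∀ g : G, (∀ k : G, lam k g * g⁻¹ ∈ HH) ∧ (∀ k : G, lam k g⁻¹ * (g⁻¹)⁻¹ ∈ HH) := by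
      intro g
      have hg : g ∈ Subgroup.closure X := by rw [hgen]; trivial
      refine Subgroup.closure_induction ?_ ?_ ?_ ?_ hg
      · intro x hx
        exact ⟨Pgen x hx, Pgeninv x hx⟩
      · refine ⟨?_, ?_⟩ <;> intro k <;> simp only [inv_one, lam_one, one_mul] <;> exact h1H
      · rintro a b _ _ ⟨ha1, ha2⟩ ⟨hb1, hb2⟩
        constructor
        · exact Pmul a b ha1 hb1
        · intro k
          rw [mul_inv_rev]
          exact Pmul b⁻¹ a⁻¹ hb2 ha2 k
      · rintro a _ ⟨ha1, ha2⟩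
        exact ⟨ha2, by simpa [inv_inv] using ha1⟩
    intro g a ha
    exact conj g (Qall g).1 a ha
  · -- lambda invariance
    set HH := {h : G | ∃ l : List G, h = l.prod ∧ ∀ g ∈ l,
      d g = 0 ∧ ∃ x ∈ X, g ∈ Subgroup.closure (Y x)} with hHH
    have main : ∀ (l : List G), (∀ b ∈ l, d b = 0 ∧ ∃ x ∈ X, b ∈ Subgroup.closure (Y x)) →
        ∀ g : G, lam g l.prod ∈ HH := by
      intro l
      induction l with
      | nil => intro _ g; rw [List.prod_nil, lam_one]; exact h1H
      | cons h l ih =>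
          intro hl g
          have hl' : ∀ b ∈ l, d b = 0 ∧ ∃ x ∈ X, b ∈ Subgroup.closure (Y x) :=
            fun b hb => hl b (List.mem_cons_of_mem h hb)
          obtain ⟨hdh, x, hxX, hhc⟩ := hl h (List.mem_cons_self)
          rw [List.prod_cons, lam_mul]
          have hfac : lam g h ∈ HH := by
            obtain ⟨lw, hlw, hlwp⟩ := hword x h hhc
            obtain ⟨hmem, hdeg⟩ := lemD x hxX lw hlw g
            rw [hlwp] at hmem hdeg
            exact hsingle _ x hxX hmem (by rw [hdeg, hdh])
          exact hmulH _ hfac _ (ih hl' _)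
    intro g a ha
    obtain ⟨l, rfl, hl⟩ := ha
    have := main l hl g
    rw [show g * l.prod - g = lam g l.prod from rfl]
    exact this
end

section
/- Let A = B = ℤ/kℤ with k > 1, φ₂ = id, φ₁(0) = 0 and φ₁(x) = 1 for x ≠ 0, and let X = A × B × I with |I| ≥ 2. Then for all a, b ∈ A, i ∈ I, the permutation σ_{(a,b,i)} of X satisfies σ_{(a,b,i)}^k = id, and σ_{(a,b,i)} and σ_{(c,d,i)} commute for all a,b,c,d ∈ A. -/
/-- For `A = B = ℤ/kℤ`, `k > 1`, `φ₂ = id`, `φ₁(0) = 0` and `φ₁(x) = 1` for `x ≠ 0`: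
each `σ_{(a,b,i)}` satisfies `σ^k = id`, and `σ_{(a,b,i)}` and `σ_{(c,d,i)}` commute. -/
theorem stmt19 {I : Type*} [DecidableEq I] [Nontrivial I] (k : ℕ) (hk : 1 < k)
    (φ₁ : ZMod k → ZMod k) (hφ₁ : ∀ x : ZMod k, φ₁ x = if x = 0 then 0 else 1)
    (φ₂ : ZMod k →+ ZMod k) (hφ₂ : φ₂ = AddMonoidHom.id (ZMod k)) :
    ∀ (a b : ZMod k) (i : I),
      (sigmaMap φ₁ φ₂ (a, b, i))^[k] = id ∧
      (∀ c d : ZMod k,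
        sigmaMap φ₁ φ₂ (a, b, i) ∘ sigmaMap φ₁ φ₂ (c, d, i) =
          sigmaMap φ₁ φ₂ (c, d, i) ∘ sigmaMap φ₁ φ₂ (a, b, i)) := by
  intro a b i
  constructor
  · have key : ∀ n (q : ZMod k × ZMod k × I),
        (sigmaMap φ₁ φ₂ (a, b, i))^[n] q =
          if i = q.2.2 then (q.1, q.2.1 + n • φ₁ (a - q.1), q.2.2)
          else (q.1 + n • φ₂ b, q.2.1, q.2.2) := by
      intro n
      induction n with
      | zero => intro q; simp
      | succ n ih =>
        intro q
        rw [Function.iterate_succ_apply', ih q]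
        by_cases h : i = q.2.2
        · simp [sigmaMap, h, succ_nsmul, add_assoc, add_mul]
        · simp [sigmaMap, h, succ_nsmul, add_assoc, add_mul]
    funext q
    rw [key k q]
    have hz : ∀ x : ZMod k, k • x = 0 := by
      intro x
      rw [nsmul_eq_mul, ZMod.natCast_self, zero_mul]
    split <;> simp [hz]
  · intro c d
    funext q
    by_cases h : i = q.2.2
    · simp [sigmaMap, Function.comp, if_pos h, h, add_right_comm]
    · simp [sigmaMap, Function.comp, if_neg h, h, add_right_comm]
end
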